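/- For r > 0 and θ ∈ ℝ define X̂(r, θ) = ( -(sin θ/2)(r - 1/r) + (sin 3θ/6)(r³ - 1/r³), -(cos θ/2)(r - 1/r) - (cos 3θ/6)(r³ - 1/r³), -cos θ·sin θ·(r² + 1/r²) ) ∈ ℝ³ and X(r, θ) = ( (cos θ/2)(r - 1/r) - (cos 3θ/6)(r³ - 1/r³), -(sin θ/2)(r - 1/r) - (sin 3θ/6)(r³ - 1/r³), (cos 2θ/2)(r² + 1/r²) ) ∈ ℝ³. Let A be the rotation of ℝ³ about the x₃-axis by angle -π/4, i.e. the matrix with rows (cos(π/4), sin(π/4), 0), (-sin(π/4), cos(π/4), 0), (0,0,1). Then for all r > 0 and θ ∈ ℝ: A · X̂(r, θ + π/4) = -X(r, θ). -/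
import Mathlib


/-- Parametrization of the blown-down limit of the rescaled complexity-2 surfaces. -/
noncomputable def Xhat (r θ : ℝ) : Fin 3 → ℝ :=
  ![-(Real.sin θ / 2) * (r - 1 / r) + (Real.sin (3 * θ) / 6) * (r ^ 3 - 1 / r ^ 3),
    -(Real.cos θ / 2) * (r - 1 / r) - (Real.cos (3 * θ) / 6) * (r ^ 3 - 1 / r ^ 3),
    -(Real.cos θ * Real.sin θ) * (r ^ 2 + 1 / r ^ 2)]

/-- Parametrization of the classical Henneberg surface `H₁`. -/
noncomputable def Xhen (r θ : ℝ) : Fin 3 → ℝ :=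
  ![(Real.cos θ / 2) * (r - 1 / r) - (Real.cos (3 * θ) / 6) * (r ^ 3 - 1 / r ^ 3),
    -(Real.sin θ / 2) * (r - 1 / r) - (Real.sin (3 * θ) / 6) * (r ^ 3 - 1 / r ^ 3),
    (Real.cos (2 * θ) / 2) * (r ^ 2 + 1 / r ^ 2)]

/-- Rotation of `ℝ³` about the `x₃`-axis by angle `-π/4`. -/
noncomputable def Arot : Matrix (Fin 3) (Fin 3) ℝ :=
  !![Real.cos (Real.pi / 4), Real.sin (Real.pi / 4), 0;
     -Real.sin (Real.pi / 4), Real.cos (Real.pi / 4), 0;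
     0, 0, 1]

/-- `A · X̂(r, θ + π/4) = -X(r, θ)` for all `r > 0` and `θ ∈ ℝ`: the blown-down
limit of the family `H(θ₂)` is congruent to the Henneberg surface `H₁`. -/
theorem limit_congruent_to_henneberg :
    ∀ (r θ : ℝ), 0 < r →
      Arot.mulVec (Xhat r (θ + Real.pi / 4)) = -(Xhen r θ) := by
  intro r θ hr
  have h2 : Real.sqrt 2 ^ 2 = 2 := Real.sq_sqrt (by norm_num)
  have hcs : Real.cos θ ^ 2 - Real.sin θ ^ 2 = Real.cos (2 * θ) := by
    have h := Real.sin_sq_add_cos_sq θ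
    rw [Real.cos_two_mul]; linarith
  have e3 : 3 * (θ + Real.pi / 4) = (3 * θ + Real.pi / 4) + Real.pi / 2 := by ring
  funext i
  fin_cases i <;>
    simp [Arot, Xhat, Xhen, Matrix.mulVec, dotProduct, Fin.sum_univ_three,
      e3, Real.sin_add, Real.cos_add, Real.sin_pi_div_four, Real.cos_pi_div_four,
      Real.sin_pi_div_two, Real.cos_pi_div_two] <;>
  first
  | linear_combination (-(Real.cos θ / 4) * (r - r⁻¹) +
      (Real.cos (3 * θ) / 12) * (r ^ 3 - (r ^ 3)⁻¹)) * h2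
  | linear_combination ((Real.sin θ / 4) * (r - r⁻¹) +
      (Real.sin (3 * θ) / 12) * (r ^ 3 - (r ^ 3)⁻¹)) * h2
  | exact Or.inl (by linear_combination (Real.cos θ ^ 2 - Real.sin θ ^ 2) / 4 * h2 + (1 / 2) * hcs)
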